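/- Let (U₁,U₂,<) be an extended word equation. If the cut graph G_{U₁,U₂,<} is acyclic, then (U₁,U₂,<) is coherent. -/
import Mathlib


open scoped Classical

namespace ExtWordEq

/-- The type of (candidate) boundary orders: relations on pairs (i,j). -/
abbrev BRel : Type := ℕ × ℕ → ℕ × ℕ → Prop

variable {X : Type*}

/-- The `i`-th side of the word equation (`i = 1` gives `U₁`, anything else `U₂`). -/
def word (U₁ U₂ : List X) (i : ℕ) : List X := if i = 1 then U₁ else U₂

/-- The variable `U_{i,j}` (1-indexed), as an optional value. -/
def letter (U₁ U₂ : List X) (b : ℕ × ℕ) : Option X := (word U₁ U₂ b.1)[b.2 - 1]?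

/-- `b` is a boundary of the word equation `(U₁, U₂)`. -/
def Boundary (U₁ U₂ : List X) (b : ℕ × ℕ) : Prop :=
  (b.1 = 1 ∨ b.1 = 2) ∧ 1 ≤ b.2 ∧ b.2 ≤ (word U₁ U₂ b.1).length

/-- `b` is a boundary of `(U₁, U₂)` or one of the conventional boundaries `(1,0)`, `(2,0)`. -/
def EBoundary (U₁ U₂ : List X) (b : ℕ × ℕ) : Prop :=
  (b.1 = 1 ∨ b.1 = 2) ∧ b.2 ≤ (word U₁ U₂ b.1).length

/-- Incomparability `a ≈ b` for a strict order. -/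
def Incomp (lt : BRel) (a b : ℕ × ℕ) : Prop := ¬ lt a b ∧ ¬ lt b a

/-- `lt` is a boundary order for the word equation `(U₁, U₂)`:
a strict weak order on the boundaries (together with the conventional boundaries
`(1,0) ≈ (2,0)`), extending `(i,j) < (i,j+1)` and with `(1,m) ≈ (2,n)`. -/
structure BoundaryOrder (U₁ U₂ : List X) (lt : BRel) : Prop where
  irrefl : ∀ a, EBoundary U₁ U₂ a → ¬ lt a a
  trans : ∀ a b c, EBoundary U₁ U₂ a → EBoundary U₁ U₂ b → EBoundary U₁ U₂ c →
    lt a b → lt b c → lt a c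
  incomp_trans : ∀ a b c, EBoundary U₁ U₂ a → EBoundary U₁ U₂ b → EBoundary U₁ U₂ c →
    Incomp lt a b → Incomp lt b c → Incomp lt a c
  succ : ∀ i j : ℕ, EBoundary U₁ U₂ (i, j + 1) → lt (i, j) (i, j + 1)
  top : Incomp lt (1, U₁.length) (2, U₂.length)
  bot : Incomp lt (1, 0) (2, 0)

/-- `L(U_{i,1} U_{i,2} ⋯ U_{i,j})` where `L` is the additive extension of a length
assignment on variables. -/
def prefixLen (U₁ U₂ : List X) (L : X → ℕ) (b : ℕ × ℕ) : ℕ :=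
  (((word U₁ U₂ b.1).take b.2).map L).sum

/-- The extended word equation `(U₁, U₂, lt)` is coherent. -/
def Coherent (U₁ U₂ : List X) (lt : BRel) : Prop :=
  ∃ L : X → ℕ, (∀ x, 0 < L x) ∧
    ∀ a b, Boundary U₁ U₂ a → Boundary U₁ U₂ b →
      (lt a b ↔ prefixLen U₁ U₂ L a < prefixLen U₁ U₂ L b)

/-- The boundary `a` cuts the boundary `b`. -/
def Cuts (U₁ U₂ : List X) (lt : BRel) (a b : ℕ × ℕ) : Prop :=
  Boundary U₁ U₂ a ∧ Boundary U₁ U₂ b ∧ a ≠ b ∧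
    lt (a.1, a.2 - 1) b ∧ lt (b.1, b.2 - 1) a

/-- The boundary `a` mirrors the boundary `b`. -/
def Mirrors (U₁ U₂ : List X) (lt : BRel) (a b : ℕ × ℕ) : Prop :=
  Boundary U₁ U₂ a ∧ Boundary U₁ U₂ b ∧ letter U₁ U₂ a = letter U₁ U₂ b ∧
    (¬ Incomp lt a b ∨ ¬ Incomp lt (a.1, a.2 - 1) (b.1, b.2 - 1))

/-- Edge relation of the cut graph `G_{U₁,U₂,<}`. -/
def CutEdge (U₁ U₂ : List X) (lt : BRel) (a b : ℕ × ℕ) : Prop :=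
  ∃ c, Cuts U₁ U₂ lt a c ∧ Mirrors U₁ U₂ lt c b

/-- `w 0, w 1, …, w n` is a cycle (of length `n ≥ 1`) in the cut graph. -/
def IsCycle (U₁ U₂ : List X) (lt : BRel) (n : ℕ) (w : ℕ → ℕ × ℕ) : Prop :=
  0 < n ∧ w n = w 0 ∧ ∀ k < n, CutEdge U₁ U₂ lt (w k) (w (k + 1))

/-- The cut graph `G_{U₁,U₂,<}` is acyclic. -/
def Acyclic (U₁ U₂ : List X) (lt : BRel) : Prop :=
  ¬ ∃ n w, IsCycle U₁ U₂ lt n w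

variable [DecidableEq X]

/-- Case I extended Nielsen transformation (here `x = U_{1,1}`, `y = U_{2,1}`,
and `T(y) = x`). -/
def NielsenI (U₁ U₂ : List X) (lt : BRel) (U₁' U₂' : List X) (lt' : BRel) : Prop :=
  ∃ x y : X, U₁.head? = some x ∧ U₂.head? = some y ∧
    Incomp lt (1, 1) (2, 1) ∧
    U₁' = (U₁.map fun z => if z = y then x else z).tail ∧
    U₂' = (U₂.map fun z => if z = y then x else z).tail ∧
    BoundaryOrder U₁' U₂' lt' ∧
    ∀ a b : ℕ × ℕ, EBoundary U₁' U₂' a → EBoundary U₁' U₂' b →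
      (lt' a b ↔ lt (a.1, a.2 + 1) (b.1, b.2 + 1))

/-- The substitution `T(x) = y x` (identity on other variables), applied to a word. -/
def expand (x y : X) (l : List X) : List X :=
  l.flatMap fun z => if z = x then [y, x] else [z]

/-- The map `μ(i,j) = j + #{j' ≤ j : U_{i,j'} = x} − 1` (as a map on boundaries),
where `x = U_{1,1}`. -/
def mu (U₁ U₂ : List X) (x : X) (b : ℕ × ℕ) : ℕ × ℕ :=
  (b.1, b.2 + ((word U₁ U₂ b.1).take b.2).count x - 1)

/-- The map `ν(i,j) = j − #{j' ≤ j : U'_{i,j'} = x} + 1` (as a map on boundaries),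
where `x = U_{1,1}`. -/
def nu (U₁' U₂' : List X) (x : X) (b : ℕ × ℕ) : ℕ × ℕ :=
  (b.1, b.2 - ((word U₁' U₂' b.1).take b.2).count x + 1)

/-- Membership in `B⁻ = B ∖ {(2,1)}`. -/
def Bminus (U₁ U₂ : List X) (b : ℕ × ℕ) : Prop := Boundary U₁ U₂ b ∧ b ≠ (2, 1)

/-- Membership in `B'⁻ = {(i, μ(i,j)) : (i,j) ∈ B⁻}` (`x = U_{1,1}`). -/
def Bpminus (U₁ U₂ : List X) (x : X) (b' : ℕ × ℕ) : Prop :=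
  ∃ b, Bminus U₁ U₂ b ∧ mu U₁ U₂ x b = b'

/-- Case II extended Nielsen transformation, with the heads `x = U_{1,1}`,
`y = U_{2,1}` made explicit. -/
def NielsenIIxy (U₁ U₂ : List X) (lt : BRel) (U₁' U₂' : List X) (lt' : BRel)
    (x y : X) : Prop :=
  U₁.head? = some x ∧ U₂.head? = some y ∧
  lt (2, 1) (1, 1) ∧
  U₁' = (expand x y U₁).tail ∧
  U₂' = (expand x y U₂).tail ∧
  BoundaryOrder U₁' U₂' lt' ∧
  ∀ a b, Bpminus U₁ U₂ x a → Bpminus U₁ U₂ x b →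
    (lt' a b ↔ lt (nu U₁' U₂' x a) (nu U₁' U₂' x b))

/-- Case II extended Nielsen transformation. -/
def NielsenII (U₁ U₂ : List X) (lt : BRel) (U₁' U₂' : List X) (lt' : BRel) : Prop :=
  ∃ x y : X, NielsenIIxy U₁ U₂ lt U₁' U₂' lt' x y

/-- The dual boundary order. -/
def dualRel (lt : BRel) : BRel := fun a b => lt (3 - a.1, a.2) (3 - b.1, b.2)

/-- Case III extended Nielsen transformation: case II applied to the dual,
then dualized back. -/
def NielsenIII (U₁ U₂ : List X) (lt : BRel) (U₁' U₂' : List X) (lt' : BRel) : Prop :=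
  NielsenII U₂ U₁ (dualRel lt) U₂' U₁' (dualRel lt')

/-- `(U₁', U₂', lt')` is an extended Nielsen transformation of the nontrivial coherent
extended word equation `(U₁, U₂, lt)`. -/
def ExtNielsen (U₁ U₂ : List X) (lt : BRel) (U₁' U₂' : List X) (lt' : BRel) : Prop :=
  U₁ ≠ [] ∧ U₂ ≠ [] ∧ BoundaryOrder U₁ U₂ lt ∧ Coherent U₁ U₂ lt ∧
    (NielsenI U₁ U₂ lt U₁' U₂' lt' ∨ NielsenII U₁ U₂ lt U₁' U₂' lt' ∨
      NielsenIII U₁ U₂ lt U₁' U₂' lt')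

/-- A coherent extended Nielsen transformation. -/
def CohNielsen (U₁ U₂ : List X) (lt : BRel) (U₁' U₂' : List X) (lt' : BRel) : Prop :=
  ExtNielsen U₁ U₂ lt U₁' U₂' lt' ∧ Coherent U₁' U₂' lt'

/-- `(U₁, U₂, lt)` is (strongly) terminating: there is no infinite sequence of coherent
extended Nielsen transformations starting from it. -/
def Terminating (U₁ U₂ : List X) (lt : BRel) : Prop :=
  ¬ ∃ f : ℕ → List X × List X × BRel,
    f 0 = (U₁, U₂, lt) ∧
    ∀ n, CohNielsen (f n).1 (f n).2.1 (f n).2.2 (f (n + 1)).1 (f (n + 1)).2.1 (f (n + 1)).2.2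

section Core
variable {α : Type*}

/-- The class of an occurrence: its letter together with its rank interval. -/
def cls (ℓ : ℕ×ℕ → α) (lo hi : ℕ×ℕ → ℕ) (o : ℕ×ℕ) : α × ℕ × ℕ := (ℓ o, lo o, hi o)

/-- `o` is an occurrence of an "active" letter relative to `V`. -/
def activeIn (ℓ : ℕ×ℕ → α) (lo hi : ℕ×ℕ → ℕ) (V : Finset (ℕ×ℕ)) (o : ℕ×ℕ) : Prop :=
  ∃ o' ∈ V, ℓ o' = ℓ o ∧ (lo o', hi o') ≠ (lo o, hi o)

/-- The set of active classes. -/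
noncomputable def clsSet (ℓ : ℕ×ℕ → α) (lo hi : ℕ×ℕ → ℕ) (V : Finset (ℕ×ℕ)) :
    Finset (α × ℕ × ℕ) :=
  (V.filter (activeIn ℓ lo hi V)).image (cls ℓ lo hi)

lemma cls_eq_iff (ℓ : ℕ×ℕ → α) (lo hi : ℕ×ℕ → ℕ) {o o' : ℕ×ℕ} :
    cls ℓ lo hi o = cls ℓ lo hi o' ↔ ℓ o = ℓ o' ∧ lo o = lo o' ∧ hi o = hi o' := by
  simp [cls, Prod.ext_iff]

lemma exists_good (ℓ : ℕ×ℕ → α) (lo hi : ℕ×ℕ → ℕ) (E : ℕ×ℕ → ℕ×ℕ → Prop)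
    (V : Finset (ℕ×ℕ))
    (hE : ∀ a c b, a ∈ V → c ∈ V → b ∈ V → lo a < hi c → lo c < hi a → a ≠ c →
      ℓ c = ℓ b → (lo c, hi c) ≠ (lo b, hi b) → E a b)
    (hnc : ∀ o ∈ V, ¬ Relation.TransGen E o o)
    (hA : (clsSet ℓ lo hi V).Nonempty) :
    ∃ P ∈ clsSet ℓ lo hi V, ∀ c ∈ V, activeIn ℓ lo hi V c →
      P.2.1 < hi c → lo c < P.2.2 → ∀ a ∈ V, cls ℓ lo hi a = P → a = c := by
  by_contra hcon
  push_neg at hcon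
  set St : α × ℕ × ℕ → Prop := fun P =>
    ∃ w : (ℕ×ℕ) × (ℕ×ℕ) × (ℕ×ℕ),
      w.1 ∈ V ∧ w.2.1 ∈ V ∧ w.2.2 ∈ V ∧ lo w.1 < hi w.2.1 ∧ lo w.2.1 < hi w.1 ∧
      w.1 ≠ w.2.1 ∧ ℓ w.2.1 = ℓ w.2.2 ∧ (lo w.2.1, hi w.2.1) ≠ (lo w.2.2, hi w.2.2) ∧
      cls ℓ lo hi w.1 = P ∧ cls ℓ lo hi w.2.2 ∈ clsSet ℓ lo hi V with hSt
  have hStA : ∀ P ∈ clsSet ℓ lo hi V, St P := by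
    intro P hP
    obtain ⟨c, hcV, hcact, h1, h2, a, haV, hacls, hac⟩ := hcon P hP
    obtain ⟨b, hbV, hlb, hib⟩ := hcact
    subst hacls
    refine ⟨⟨a, c, b⟩, haV, hcV, hbV, ?_, ?_, hac, hlb.symm, fun h => hib h.symm, rfl, ?_⟩
    · simpa [cls] using h1
    · simpa [cls] using h2
    · exact Finset.mem_image.mpr ⟨b, Finset.mem_filter.mpr
        ⟨hbV, ⟨c, hcV, hlb.symm, fun h => hib h.symm⟩⟩, rfl⟩
  set F : α × ℕ × ℕ → (ℕ×ℕ) × (ℕ×ℕ) × (ℕ×ℕ) := fun P =>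
    if h : St P then h.choose else default with hF
  have hFspec : ∀ P, St P → (F P).1 ∈ V ∧ (F P).2.1 ∈ V ∧ (F P).2.2 ∈ V ∧
      lo (F P).1 < hi (F P).2.1 ∧ lo (F P).2.1 < hi (F P).1 ∧ (F P).1 ≠ (F P).2.1 ∧
      ℓ (F P).2.1 = ℓ (F P).2.2 ∧
      (lo (F P).2.1, hi (F P).2.1) ≠ (lo (F P).2.2, hi (F P).2.2) ∧
      cls ℓ lo hi (F P).1 = P ∧ cls ℓ lo hi (F P).2.2 ∈ clsSet ℓ lo hi V := by
    intro P h
    have : F P = h.choose := by rw [hF]; simp only [dif_pos h]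
    rw [this]
    exact h.choose_spec
  set step : α × ℕ × ℕ → α × ℕ × ℕ := fun P => cls ℓ lo hi (F P).2.2 with hstep
  obtain ⟨P₀, hP₀⟩ := hA
  set seq : ℕ → α × ℕ × ℕ := fun k => step^[k] P₀ with hseq
  have hsk : ∀ k, seq (k+1) = step (seq k) := fun k => Function.iterate_succ_apply' step k P₀
  have hseqA : ∀ k, seq k ∈ clsSet ℓ lo hi V := by
    intro k
    induction k with
    | zero => exact hP₀
    | succ k ih =>
      rw [hsk k]
      exact (hFspec _ (hStA _ ih)).2.2.2.2.2.2.2.2.2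
  set av : ℕ → ℕ×ℕ := fun k => (F (seq k)).1 with hav
  have havV : ∀ k, av k ∈ V := fun k => (hFspec _ (hStA _ (hseqA k))).1
  have hedge : ∀ k, E (av k) (av (k+1)) := by
    intro k
    have hs : St (seq k) := hStA _ (hseqA k)
    obtain ⟨h1, h2, h3, h4, h5, h6, h7, h8, h9, h10⟩ := hFspec _ hs
    have h9' : cls ℓ lo hi (av (k+1)) = seq (k+1) :=
      (hFspec _ (hStA _ (hseqA (k+1)))).2.2.2.2.2.2.2.2.1
    have hc : cls ℓ lo hi (av (k+1)) = cls ℓ lo hi (F (seq k)).2.2 := by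
      rw [h9', hsk k]
    obtain ⟨e1, e2, e3⟩ := (cls_eq_iff ℓ lo hi).mp hc
    refine hE (av k) (F (seq k)).2.1 (av (k+1)) (havV k) h2 (havV (k+1)) h4 h5 h6 ?_ ?_
    · rw [h7, e1]
    · rw [e2, e3]; exact h8
  obtain ⟨i, hi', j, hj', hij, hseqij⟩ :=
    Finset.exists_ne_map_eq_of_card_lt_of_maps_to
      (s := Finset.range ((clsSet ℓ lo hi V).card + 1)) (t := clsSet ℓ lo hi V)
      (by simp) (fun k _ => hseqA k)
  wlog hlt : i < j generalizing i j
  · exact this j hj' i hi' hij.symm hseqij.symm (by omega)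
  have htg : ∀ d k, Relation.TransGen E (av k) (av (k + d + 1)) := by
    intro d
    induction d with
    | zero => intro k; exact Relation.TransGen.single (hedge k)
    | succ d ih => exact fun k => Relation.TransGen.tail (ih k) (hedge (k + d + 1))
  have havij : av i = av j := by show (F (seq i)).1 = (F (seq j)).1; rw [hseqij]
  have : Relation.TransGen E (av i) (av i) := by
    have := htg (j - i - 1) i
    rwa [show i + (j - i - 1) + 1 = j by omega, ← havij] at this
  exact hnc (av i) (havV i) this

end Core
section Core2
variable {α : Type*}

/-- Gap function obtained by rescaling `g'` by `s` and overwriting the gaps in `(l, h]`. -/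
def patch (l h T s : ℕ) (g' : ℕ → ℕ) : ℕ → ℕ := fun t =>
  if l < t ∧ t ≤ h then (if t = h then T - (s - 1) else 1) else s * g' t

lemma patch_pos {l h T s : ℕ} {g' : ℕ → ℕ} (hs : 1 ≤ s) (hT : s ≤ T)
    (hg' : ∀ t, 0 < g' t) (t : ℕ) : 0 < patch l h T s g' t := by
  unfold patch
  split
  · split
    · omega
    · exact one_pos
  · exact Nat.mul_pos (by omega) (hg' t)

lemma sum_Ioc_ite (l h A : ℕ) (hlh : l < h) :
    ∑ t ∈ Finset.Ioc l h, (if t = h then A else 1) = A + (h - l - 1) := by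
  obtain ⟨h', rfl⟩ : ∃ h', h = h' + 1 := ⟨h - 1, by omega⟩
  rw [Finset.sum_Ioc_succ_top (by omega)]
  have hrw : ∀ t ∈ Finset.Ioc l h', (if t = h' + 1 then A else 1) = 1 := by
    intro t ht; rw [Finset.mem_Ioc] at ht; rw [if_neg (by omega)]
  rw [Finset.sum_congr rfl hrw, if_pos rfl, Finset.sum_const, smul_eq_mul, mul_one,
    Nat.card_Ioc]
  omega

lemma patch_sum_in {l h T s : ℕ} {g' : ℕ → ℕ} (hlh : l < h) (hs : s = h - l) (hT : s ≤ T) :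
    ∑ t ∈ Finset.Ioc l h, patch l h T s g' t = T := by
  have hrw : ∀ t ∈ Finset.Ioc l h, patch l h T s g' t = if t = h then T - (s - 1) else 1 := by
    intro t ht; rw [Finset.mem_Ioc] at ht
    unfold patch; rw [if_pos ht]
  rw [Finset.sum_congr rfl hrw, sum_Ioc_ite l h _ hlh]
  omega

lemma patch_sum_out {l h T s : ℕ} {g' : ℕ → ℕ} {lo' hi' : ℕ}
    (hdis : hi' ≤ l ∨ h ≤ lo') :
    ∑ t ∈ Finset.Ioc lo' hi', patch l h T s g' t = s * ∑ t ∈ Finset.Ioc lo' hi', g' t := by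
  rw [Finset.mul_sum]
  apply Finset.sum_congr rfl
  intro t ht; rw [Finset.mem_Ioc] at ht
  unfold patch; rw [if_neg (by omega)]

lemma core (ℓ : ℕ×ℕ → α) (lo hi : ℕ×ℕ → ℕ) (E : ℕ×ℕ → ℕ×ℕ → Prop) :
    ∀ (n : ℕ) (V : Finset (ℕ×ℕ)), (clsSet ℓ lo hi V).card ≤ n →
    (∀ o ∈ V, lo o < hi o) →
    (∀ a c b, a ∈ V → c ∈ V → b ∈ V → lo a < hi c → lo c < hi a → a ≠ c →
      ℓ c = ℓ b → (lo c, hi c) ≠ (lo b, hi b) → E a b) →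
    (∀ o ∈ V, ¬ Relation.TransGen E o o) →
    ∃ g : ℕ → ℕ, (∀ t, 0 < g t) ∧
      ∀ o ∈ V, ∀ o' ∈ V, ℓ o = ℓ o' →
        ∑ t ∈ Finset.Ioc (lo o) (hi o), g t = ∑ t ∈ Finset.Ioc (lo o') (hi o'), g t := by
  intro n
  induction n with
  | zero =>
    intro V hcard hlh hE hnc
    refine ⟨fun _ => 1, fun _ => one_pos, ?_⟩
    intro o hoV o' ho'V hll
    have hiv : (lo o, hi o) = (lo o', hi o') := by
      by_contra hne
      have hmem : cls ℓ lo hi o ∈ clsSet ℓ lo hi V :=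
        Finset.mem_image.mpr ⟨o, Finset.mem_filter.mpr
          ⟨hoV, ⟨o', ho'V, hll.symm, fun h => hne h.symm⟩⟩, rfl⟩
      have := Finset.card_pos.mpr ⟨_, hmem⟩
      omega
    rw [show lo o = lo o' from congrArg Prod.fst hiv,
        show hi o = hi o' from congrArg Prod.snd hiv]
  | succ n ih =>
    intro V hcard hlh hE hnc
    by_cases hA : (clsSet ℓ lo hi V).Nonempty
    · obtain ⟨P, hPA, hGood⟩ := exists_good ℓ lo hi E V hE hnc hA
      obtain ⟨a₀, ha₀f, ha₀cls⟩ := Finset.mem_image.mp hPA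
      have ha₀V : a₀ ∈ V := (Finset.mem_filter.mp ha₀f).1
      have hP1 : P.1 = ℓ a₀ := by rw [← ha₀cls]; rfl
      have hP21 : P.2.1 = lo a₀ := by rw [← ha₀cls]; rfl
      have hP22 : P.2.2 = hi a₀ := by rw [← ha₀cls]; rfl
      set V' := V.filter (fun o => cls ℓ lo hi o ≠ P) with hV'
      have hV'sub : V' ⊆ V := Finset.filter_subset _ _
      have hmemV' : ∀ o, o ∈ V' ↔ o ∈ V ∧ cls ℓ lo hi o ≠ P := fun o => Finset.mem_filter
      have hactV' : ∀ o, activeIn ℓ lo hi V' o → activeIn ℓ lo hi V o := by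
        rintro o ⟨w, hw, h⟩; exact ⟨w, hV'sub hw, h⟩
      have hclssub : clsSet ℓ lo hi V' ⊆ (clsSet ℓ lo hi V).erase P := by
        intro Q hQ
        obtain ⟨o, hof, hocls⟩ := Finset.mem_image.mp hQ
        obtain ⟨hoV', hoact⟩ := Finset.mem_filter.mp hof
        refine Finset.mem_erase.mpr ⟨?_, Finset.mem_image.mpr ⟨o, Finset.mem_filter.mpr
          ⟨hV'sub hoV', hactV' o hoact⟩, hocls⟩⟩
        rw [← hocls]
        exact ((hmemV' o).mp hoV').2
      have hcard' : (clsSet ℓ lo hi V').card ≤ n := by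
        have h1 := Finset.card_le_card hclssub
        have h2 := Finset.card_erase_of_mem hPA
        have h3 := Finset.card_pos.mpr ⟨P, hPA⟩
        omega
      obtain ⟨g', hg'pos, hg'⟩ := ih V' hcard'
        (fun o ho => hlh o (hV'sub ho))
        (fun a c b ha hc hb => hE a c b (hV'sub ha) (hV'sub hc) (hV'sub hb))
        (fun o ho => hnc o (hV'sub ho))
      by_cases hx : ∃ os ∈ V', ℓ os = P.1
      · obtain ⟨os, hosV', hosl⟩ := hx
        set s := hi a₀ - lo a₀ with hs
        have hs1 : 1 ≤ s := by have := hlh a₀ ha₀V; omega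
        set S := ∑ t ∈ Finset.Ioc (lo os) (hi os), g' t with hSdef
        have hS1 : 1 ≤ S := by
          have h1 : (Finset.Ioc (lo os) (hi os)).Nonempty :=
            Finset.nonempty_Ioc.mpr (hlh os (hV'sub hosV'))
          exact Finset.sum_pos (fun t _ => hg'pos t) h1
        set T := s * S with hT
        have hsT : s ≤ T := by
          calc s = s * 1 := (mul_one s).symm
            _ ≤ s * S := Nat.mul_le_mul_left s hS1
        set g := patch (lo a₀) (hi a₀) T s g' with hgdef
        have hgpos : ∀ t, 0 < g t := patch_pos hs1 hsT hg'pos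
        have hK3 : ∀ o ∈ V, activeIn ℓ lo hi V o → cls ℓ lo hi o ≠ P →
            (hi o ≤ lo a₀ ∨ hi a₀ ≤ lo o) := by
          intro o hoV hoact hne
          by_contra hcon2
          push_neg at hcon2
          have heq := hGood o hoV hoact (by omega) (by omega) a₀ ha₀V ha₀cls
          exact hne (by rw [← heq, ha₀cls])
        have hval : ∀ z ∈ V, activeIn ℓ lo hi V z → ℓ z = P.1 →
            ∑ t ∈ Finset.Ioc (lo z) (hi z), g t = T := by
          intro z hzV hzact hzl
          by_cases hc : cls ℓ lo hi z = P
          · obtain ⟨_, e2, e3⟩ := (cls_eq_iff ℓ lo hi).mp (hc.trans ha₀cls.symm)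
            rw [e2, e3, hgdef]
            exact patch_sum_in (hlh a₀ ha₀V) hs hsT
          · rw [hgdef, patch_sum_out (hK3 z hzV hzact hc),
              hg' z ((hmemV' z).mpr ⟨hzV, hc⟩) os hosV' (hzl.trans hosl.symm)]
        refine ⟨g, hgpos, ?_⟩
        intro o hoV o' ho'V hll
        by_cases hiv : (lo o, hi o) = (lo o', hi o')
        · rw [show lo o = lo o' from congrArg Prod.fst hiv,
              show hi o = hi o' from congrArg Prod.snd hiv]
        · have hoact : activeIn ℓ lo hi V o := ⟨o', ho'V, hll.symm, fun h => hiv h.symm⟩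
          have ho'act : activeIn ℓ lo hi V o' := ⟨o, hoV, hll, hiv⟩
          by_cases ho : ℓ o = P.1
          · rw [hval o hoV hoact ho, hval o' ho'V ho'act (hll.symm.trans ho)]
          · have hc1 : cls ℓ lo hi o ≠ P := fun h => ho (by rw [← h]; rfl)
            have hc2 : cls ℓ lo hi o' ≠ P := fun h => ho (hll.trans (by rw [← h]; rfl))
            rw [hgdef, patch_sum_out (hK3 o hoV hoact hc1),
              patch_sum_out (hK3 o' ho'V ho'act hc2),
              hg' o ((hmemV' o).mpr ⟨hoV, hc1⟩) o' ((hmemV' o').mpr ⟨ho'V, hc2⟩) hll]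
      · refine ⟨g', hg'pos, ?_⟩
        intro o hoV o' ho'V hll
        by_cases c1 : cls ℓ lo hi o = P <;> by_cases c2 : cls ℓ lo hi o' = P
        · obtain ⟨_, e2, e3⟩ := (cls_eq_iff ℓ lo hi).mp (c1.trans c2.symm)
          rw [e2, e3]
        · exact absurd ⟨o', (hmemV' o').mpr ⟨ho'V, c2⟩, by rw [← hll, ← c1]; rfl⟩ hx
        · exact absurd ⟨o, (hmemV' o).mpr ⟨hoV, c1⟩, by rw [hll, ← c2]; rfl⟩ hx
        · exact hg' o ((hmemV' o).mpr ⟨hoV, c1⟩) o' ((hmemV' o').mpr ⟨ho'V, c2⟩) hll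
    · refine ⟨fun _ => 1, fun _ => one_pos, ?_⟩
      intro o hoV o' ho'V hll
      have hiv : (lo o, hi o) = (lo o', hi o') := by
        by_contra hne
        exact hA ⟨_, Finset.mem_image.mpr ⟨o, Finset.mem_filter.mpr
          ⟨hoV, ⟨o', ho'V, hll.symm, fun h => hne h.symm⟩⟩, rfl⟩⟩
      rw [show lo o = lo o' from congrArg Prod.fst hiv,
          show hi o = hi o' from congrArg Prod.snd hiv]

end Core2
section Rank

lemma word_one (U₁ U₂ : List X) : word U₁ U₂ 1 = U₁ := if_pos rfl

lemma word_two (U₁ U₂ : List X) : word U₁ U₂ 2 = U₂ := if_neg (by norm_num)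

/-- The finite set of extended boundaries. -/
noncomputable def ebFinset (U₁ U₂ : List X) : Finset (ℕ × ℕ) :=
  ((Finset.range (U₁.length + 1)).image fun j => ((1:ℕ), j)) ∪
  ((Finset.range (U₂.length + 1)).image fun j => ((2:ℕ), j))

/-- The finite set of boundaries. -/
noncomputable def bdFinset (U₁ U₂ : List X) : Finset (ℕ × ℕ) :=
  ((Finset.Icc 1 U₁.length).image fun j => ((1:ℕ), j)) ∪
  ((Finset.Icc 1 U₂.length).image fun j => ((2:ℕ), j))

lemma mem_ebFinset (U₁ U₂ : List X) {b : ℕ × ℕ} :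
    b ∈ ebFinset U₁ U₂ ↔ EBoundary U₁ U₂ b := by
  obtain ⟨i, j⟩ := b
  simp only [ebFinset, EBoundary, Finset.mem_union, Finset.mem_image, Finset.mem_range,
    Prod.mk.injEq]
  constructor
  · rintro (⟨j', hj', rfl, rfl⟩ | ⟨j', hj', rfl, rfl⟩)
    · exact ⟨Or.inl rfl, by rw [word_one]; omega⟩
    · exact ⟨Or.inr rfl, by rw [word_two]; omega⟩
  · rintro ⟨(rfl | rfl), h2⟩
    · left; exact ⟨j, by rw [word_one] at h2; omega, rfl, rfl⟩
    · right; exact ⟨j, by rw [word_two] at h2; omega, rfl, rfl⟩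

lemma mem_bdFinset (U₁ U₂ : List X) {b : ℕ × ℕ} :
    b ∈ bdFinset U₁ U₂ ↔ Boundary U₁ U₂ b := by
  obtain ⟨i, j⟩ := b
  simp only [bdFinset, Boundary, Finset.mem_union, Finset.mem_image, Finset.mem_Icc,
    Prod.mk.injEq]
  constructor
  · rintro (⟨j', hj', rfl, rfl⟩ | ⟨j', hj', rfl, rfl⟩)
    · exact ⟨Or.inl rfl, hj'.1, by rw [word_one]; omega⟩
    · exact ⟨Or.inr rfl, hj'.1, by rw [word_two]; omega⟩
  · rintro ⟨(rfl | rfl), h1, h2⟩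
    · left; exact ⟨j, ⟨h1, by rw [word_one] at h2; omega⟩, rfl, rfl⟩
    · right; exact ⟨j, ⟨h1, by rw [word_two] at h2; omega⟩, rfl, rfl⟩

/-- The rank of an extended boundary: the number of extended boundaries strictly below it. -/
noncomputable def rk (U₁ U₂ : List X) (lt : BRel) (b : ℕ × ℕ) : ℕ :=
  ((ebFinset U₁ U₂).filter (fun a => lt a b)).card

variable {U₁ U₂ : List X} {lt : BRel}

lemma lt_of_lt_incomp (hbo : BoundaryOrder U₁ U₂ lt) {a b c : ℕ × ℕ}
    (ha : EBoundary U₁ U₂ a) (hb : EBoundary U₁ U₂ b) (hc : EBoundary U₁ U₂ c)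
    (h1 : lt a b) (h2 : Incomp lt b c) : lt a c := by
  by_contra h
  by_cases h' : lt c a
  · exact h2.2 (hbo.trans c a b hc ha hb h' h1)
  · exact (hbo.incomp_trans a c b ha hc hb ⟨h, h'⟩ ⟨h2.2, h2.1⟩).1 h1

lemma lt_of_incomp_lt (hbo : BoundaryOrder U₁ U₂ lt) {a b c : ℕ × ℕ}
    (ha : EBoundary U₁ U₂ a) (hb : EBoundary U₁ U₂ b) (hc : EBoundary U₁ U₂ c)
    (h1 : Incomp lt a b) (h2 : lt b c) : lt a c := by
  by_contra h
  by_cases h' : lt c a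
  · exact h1.2 (hbo.trans b c a hb hc ha h2 h')
  · exact (hbo.incomp_trans b a c hb ha hc ⟨h1.2, h1.1⟩ ⟨h, h'⟩).1 h2

lemma rk_lt_rk (hbo : BoundaryOrder U₁ U₂ lt) {a b : ℕ × ℕ}
    (ha : EBoundary U₁ U₂ a) (hb : EBoundary U₁ U₂ b) :
    lt a b ↔ rk U₁ U₂ lt a < rk U₁ U₂ lt b := by
  constructor
  · intro h
    apply Finset.card_lt_card
    constructor
    · intro c hc
      rw [Finset.mem_filter] at hc ⊢
      exact ⟨hc.1, hbo.trans c a b ((mem_ebFinset U₁ U₂).mp hc.1) ha hb hc.2 h⟩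
    · intro hsub
      have hmem : a ∈ (ebFinset U₁ U₂).filter (fun c => lt c b) :=
        Finset.mem_filter.mpr ⟨(mem_ebFinset U₁ U₂).mpr ha, h⟩
      exact hbo.irrefl a ha (Finset.mem_filter.mp (hsub hmem)).2
  · intro h
    by_contra hne
    have hsub : ((ebFinset U₁ U₂).filter (fun c => lt c b)) ⊆
        ((ebFinset U₁ U₂).filter (fun c => lt c a)) := by
      intro c hc
      rw [Finset.mem_filter] at hc ⊢
      have hcE := (mem_ebFinset U₁ U₂).mp hc.1
      refine ⟨hc.1, ?_⟩
      by_cases h' : lt b a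
      · exact hbo.trans c b a hcE hb ha hc.2 h'
      · exact lt_of_lt_incomp hbo hcE hb ha hc.2 ⟨h', hne⟩
    have := Finset.card_le_card hsub
    rw [rk, rk] at h
    omega

lemma rk_eq_of_incomp (hbo : BoundaryOrder U₁ U₂ lt) {a b : ℕ × ℕ}
    (ha : EBoundary U₁ U₂ a) (hb : EBoundary U₁ U₂ b) (h : Incomp lt a b) :
    rk U₁ U₂ lt a = rk U₁ U₂ lt b := by
  have h1 : ¬ (rk U₁ U₂ lt a < rk U₁ U₂ lt b) := fun hl => h.1 ((rk_lt_rk hbo ha hb).mpr hl)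
  have h2 : ¬ (rk U₁ U₂ lt b < rk U₁ U₂ lt a) := fun hl => h.2 ((rk_lt_rk hbo hb ha).mpr hl)
  omega

lemma lt_chain (hbo : BoundaryOrder U₁ U₂ lt) (i : ℕ) :
    ∀ j k : ℕ, k < j → EBoundary U₁ U₂ (i, j) → lt (i, k) (i, j) := by
  intro j
  induction j with
  | zero => omega
  | succ j ihj =>
    intro k hk hEB
    have hstep := hbo.succ i j hEB
    by_cases hkj : k = j
    · subst hkj; exact hstep
    · have hEBj : EBoundary U₁ U₂ (i, j) := ⟨hEB.1, le_trans (Nat.le_succ j) hEB.2⟩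
      have hEBk : EBoundary U₁ U₂ (i, k) := ⟨hEB.1, le_trans (by omega) hEB.2⟩
      exact hbo.trans (i, k) (i, j) (i, j + 1) hEBk hEBj hEB (ihj k (by omega) hEBj) hstep

lemma not_lt_bot (hbo : BoundaryOrder U₁ U₂ lt) {a : ℕ × ℕ} (ha : EBoundary U₁ U₂ a)
    {i : ℕ} (hi12 : i = 1 ∨ i = 2) : ¬ lt a (i, 0) := by
  obtain ⟨i', j'⟩ := a
  intro hlt
  have hi' : i' = 1 ∨ i' = 2 := ha.1
  have ha0 : EBoundary U₁ U₂ (i', 0) := ⟨ha.1, Nat.zero_le _⟩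
  have hi0 : EBoundary U₁ U₂ (i, 0) := ⟨hi12, Nat.zero_le _⟩
  by_cases hii : i' = i
  · subst hii
    by_cases hj : j' = 0
    · subst hj; exact hbo.irrefl (i', 0) ha0 hlt
    · have h0 : lt (i', 0) (i', j') := lt_chain hbo i' j' 0 (by omega) ha
      exact hbo.irrefl (i', 0) ha0 (hbo.trans (i', 0) (i', j') (i', 0) ha0 ha ha0 h0 hlt)
  · have hbot : Incomp lt (i', 0) (i, 0) := by
      rcases hi' with rfl | rfl <;> rcases hi12 with rfl | rfl
      · exact absurd rfl hii
      · exact hbo.bot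
      · exact ⟨hbo.bot.2, hbo.bot.1⟩
      · exact absurd rfl hii
    by_cases hj : j' = 0
    · subst hj; exact hbot.1 hlt
    · have h0 : lt (i', 0) (i', j') := lt_chain hbo i' j' 0 (by omega) ha
      exact hbot.1 (hbo.trans (i', 0) (i', j') (i, 0) ha0 ha hi0 h0 hlt)

lemma rk_bot (hbo : BoundaryOrder U₁ U₂ lt) {i : ℕ} (hi12 : i = 1 ∨ i = 2) :
    rk U₁ U₂ lt (i, 0) = 0 := by
  rw [rk, Finset.card_eq_zero, Finset.filter_eq_empty_iff]
  intro a ha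
  exact not_lt_bot hbo ((mem_ebFinset U₁ U₂).mp ha) hi12

lemma transGen_cycle {E : ℕ × ℕ → ℕ × ℕ → Prop} {a b : ℕ × ℕ}
    (h : Relation.TransGen E a b) :
    ∃ (n : ℕ) (w : ℕ → ℕ × ℕ), 0 < n ∧ w 0 = a ∧ w n = b ∧ ∀ k < n, E (w k) (w (k + 1)) := by
  induction h with
  | @single b hab =>
    refine ⟨1, fun k => if k = 0 then a else b, one_pos, by simp, by simp, ?_⟩
    intro k hk
    have hk0 : k = 0 := by omega
    subst hk0
    simpa using hab
  | @tail b c hab hbc ihp =>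
    obtain ⟨n, w, hn, h0, hnb, he⟩ := ihp
    refine ⟨n + 1, fun k => if k = n + 1 then c else w k, Nat.succ_pos n, ?_, by simp, ?_⟩
    · have h01 : (0 : ℕ) ≠ n + 1 := by omega
      simp only [if_neg h01]
      exact h0
    · intro k hk
      by_cases hkn : k = n
      · have hx : ¬ (k = n + 1) := by omega
        have e1 : (if k = n + 1 then c else w k) = b := by rw [if_neg hx, hkn]; exact hnb
        have e2 : (if k + 1 = n + 1 then c else w (k + 1)) = c := by simp [hkn]
        show E (if k = n + 1 then c else w k) (if k + 1 = n + 1 then c else w (k + 1))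
        rw [e1, e2]; exact hbc
      · have hx1 : ¬ (k = n + 1) := by omega
        have hx2 : ¬ (k + 1 = n + 1) := by omega
        simp only [if_neg hx1, if_neg hx2]
        exact he k (by omega)

end Rank

/-- **Proposition.** If the cut graph of an extended word equation is acyclic,
then the extended word equation is coherent. -/
theorem coherent_of_acyclic_cut_graph (U₁ U₂ : List X) (lt : BRel)
    (hbo : BoundaryOrder U₁ U₂ lt) (hacyc : Acyclic U₁ U₂ lt) :
    Coherent U₁ U₂ lt := by
  classical
  have hbd : ∀ b ∈ bdFinset U₁ U₂, Boundary U₁ U₂ b := fun b hb => (mem_bdFinset U₁ U₂).mp hb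
  have hEBof : ∀ {b : ℕ × ℕ}, Boundary U₁ U₂ b → EBoundary U₁ U₂ b := fun h => ⟨h.1, h.2.2⟩
  have hEBpred : ∀ {b : ℕ × ℕ}, Boundary U₁ U₂ b → EBoundary U₁ U₂ (b.1, b.2 - 1) :=
    fun h => ⟨h.1, le_trans (Nat.sub_le _ _) h.2.2⟩
  have hlh : ∀ b ∈ bdFinset U₁ U₂, rk U₁ U₂ lt (b.1, b.2 - 1) < rk U₁ U₂ lt b := by
    intro b hb
    have hB := hbd b hb
    have h21 : 1 ≤ b.2 := hB.2.1
    have h22 : b.2 - 1 + 1 = b.2 := by omega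
    have hsucc : lt (b.1, b.2 - 1) (b.1, b.2 - 1 + 1) :=
      hbo.succ b.1 (b.2 - 1) (by rw [h22]; exact hEBof hB)
    rw [h22] at hsucc
    exact (rk_lt_rk hbo (hEBpred hB) (hEBof hB)).mp hsucc
  have hE : ∀ a c b : ℕ × ℕ, a ∈ bdFinset U₁ U₂ → c ∈ bdFinset U₁ U₂ → b ∈ bdFinset U₁ U₂ →
      rk U₁ U₂ lt (a.1, a.2 - 1) < rk U₁ U₂ lt c →
      rk U₁ U₂ lt (c.1, c.2 - 1) < rk U₁ U₂ lt a → a ≠ c →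
      letter U₁ U₂ c = letter U₁ U₂ b →
      (rk U₁ U₂ lt (c.1, c.2 - 1), rk U₁ U₂ lt c) ≠ (rk U₁ U₂ lt (b.1, b.2 - 1), rk U₁ U₂ lt b) →
      CutEdge U₁ U₂ lt a b := by
    intro a c b ha hc hb h1 h2 hne hlet hiv
    have hBa := hbd a ha
    have hBc := hbd c hc
    have hBb := hbd b hb
    refine ⟨c, ⟨hBa, hBc, hne, ?_, ?_⟩, hBc, hBb, hlet, ?_⟩
    · exact (rk_lt_rk hbo (hEBpred hBa) (hEBof hBc)).mpr h1
    · exact (rk_lt_rk hbo (hEBpred hBc) (hEBof hBa)).mpr h2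
    · by_cases hh : rk U₁ U₂ lt c = rk U₁ U₂ lt b
      · have hl : rk U₁ U₂ lt (c.1, c.2 - 1) ≠ rk U₁ U₂ lt (b.1, b.2 - 1) := by
          intro h; exact hiv (by rw [h, hh])
        exact Or.inr (fun hinc => hl (rk_eq_of_incomp hbo (hEBpred hBc) (hEBpred hBb) hinc))
      · exact Or.inl (fun hinc => hh (rk_eq_of_incomp hbo (hEBof hBc) (hEBof hBb) hinc))
  have hnc : ∀ o ∈ bdFinset U₁ U₂, ¬ Relation.TransGen (CutEdge U₁ U₂ lt) o o := by
    intro o _ h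
    obtain ⟨n, w, hn, h0, hn0, he⟩ := transGen_cycle h
    exact hacyc ⟨n, w, hn, by rw [hn0, h0], he⟩
  obtain ⟨g, hgpos, hgsum⟩ := core (letter U₁ U₂)
    (fun b => rk U₁ U₂ lt (b.1, b.2 - 1)) (rk U₁ U₂ lt) (CutEdge U₁ U₂ lt)
    (clsSet (letter U₁ U₂) (fun b => rk U₁ U₂ lt (b.1, b.2 - 1)) (rk U₁ U₂ lt)
      (bdFinset U₁ U₂)).card
    (bdFinset U₁ U₂) le_rfl hlh hE hnc
  have hgsum' : ∀ o ∈ bdFinset U₁ U₂, ∀ o' ∈ bdFinset U₁ U₂,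
      letter U₁ U₂ o = letter U₁ U₂ o' →
      ∑ t ∈ Finset.Ioc (rk U₁ U₂ lt (o.1, o.2 - 1)) (rk U₁ U₂ lt o), g t =
      ∑ t ∈ Finset.Ioc (rk U₁ U₂ lt (o'.1, o'.2 - 1)) (rk U₁ U₂ lt o'), g t :=
    fun o ho o' ho' hll => hgsum o ho o' ho' hll
  set L : X → ℕ := fun x =>
    if h : ∃ b, b ∈ bdFinset U₁ U₂ ∧ letter U₁ U₂ b = some x then
      ∑ t ∈ Finset.Ioc (rk U₁ U₂ lt (h.choose.1, h.choose.2 - 1)) (rk U₁ U₂ lt h.choose), g t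
    else 1 with hLdef
  have hLpos : ∀ x, 0 < L x := by
    intro x
    simp only [hLdef]
    split
    · rename_i h
      exact Finset.sum_pos (fun t _ => hgpos t)
        (Finset.nonempty_Ioc.mpr (hlh _ h.choose_spec.1))
    · exact one_pos
  have hLkey : ∀ b ∈ bdFinset U₁ U₂, ∀ x : X, letter U₁ U₂ b = some x →
      ∑ t ∈ Finset.Ioc (rk U₁ U₂ lt (b.1, b.2 - 1)) (rk U₁ U₂ lt b), g t = L x := by
    intro b hb x hx
    have h : ∃ b', b' ∈ bdFinset U₁ U₂ ∧ letter U₁ U₂ b' = some x := ⟨b, hb, hx⟩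
    simp only [hLdef, dif_pos h]
    exact hgsum' b hb h.choose h.choose_spec.1 (hx.trans h.choose_spec.2.symm)
  have hpref : ∀ j i : ℕ, (i = 1 ∨ i = 2) → j ≤ (word U₁ U₂ i).length →
      prefixLen U₁ U₂ L (i, j) = ∑ t ∈ Finset.Ioc 0 (rk U₁ U₂ lt (i, j)), g t := by
    intro j
    induction j with
    | zero =>
      intro i hi12 _
      rw [rk_bot hbo hi12]
      simp [prefixLen]
    | succ j ihj =>
      intro i hi12 hlen
      have hjlen : j < (word U₁ U₂ i).length := by omega
      have hV1 : (i, j + 1) ∈ bdFinset U₁ U₂ :=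
        (mem_bdFinset U₁ U₂).mpr ⟨hi12, by omega, hlen⟩
      have hlet : letter U₁ U₂ (i, j + 1) = some ((word U₁ U₂ i)[j]) := by
        show (word U₁ U₂ i)[(j+1) - 1]? = _
        exact List.getElem?_eq_getElem hjlen
      have hkey := hLkey (i, j + 1) hV1 _ hlet
      have hstep : prefixLen U₁ U₂ L (i, j + 1) =
          prefixLen U₁ U₂ L (i, j) + L ((word U₁ U₂ i)[j]) := by
        show ((((word U₁ U₂ i)).take (j+1)).map L).sum = _
        rw [List.take_succ, List.map_append, List.sum_append,
          List.getElem?_eq_getElem hjlen]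
        rfl
      have hle : rk U₁ U₂ lt (i, j) ≤ rk U₁ U₂ lt (i, j + 1) := by
        have := hlh (i, j + 1) hV1
        exact le_of_lt this
      rw [hstep, ihj i hi12 (by omega), ← hkey,
        ← Finset.sum_Ioc_consecutive g (Nat.zero_le (rk U₁ U₂ lt (i, j))) hle]
      rfl
  refine ⟨L, hLpos, ?_⟩
  intro a b hBa hBb
  obtain ⟨ia, ja⟩ := a
  obtain ⟨ib, jb⟩ := b
  rw [hpref ja ia hBa.1 hBa.2.2, hpref jb ib hBb.1 hBb.2.2,
    rk_lt_rk hbo (hEBof hBa) (hEBof hBb)]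
  constructor
  · intro h
    rw [← Finset.sum_Ioc_consecutive g (Nat.zero_le (rk U₁ U₂ lt (ia, ja))) h.le]
    have hpos : 0 < ∑ t ∈ Finset.Ioc (rk U₁ U₂ lt (ia, ja)) (rk U₁ U₂ lt (ib, jb)), g t :=
      Finset.sum_pos (fun t _ => hgpos t) (Finset.nonempty_Ioc.mpr h)
    omega
  · intro h
    by_contra hnot
    have hle : ∑ t ∈ Finset.Ioc 0 (rk U₁ U₂ lt (ib, jb)), g t ≤
        ∑ t ∈ Finset.Ioc 0 (rk U₁ U₂ lt (ia, ja)), g t :=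
      Finset.sum_le_sum_of_subset (Finset.Ioc_subset_Ioc le_rfl (by omega))
    omega

end ExtWordEq
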